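/- Under the conditions ensuring convergence (e.g., |q| < p = 1, |z| < 1), the product formula ₁Φ₀((a,b);—;(p,q),z) · ₁Φ₀((b,a);—;(p,q),z) = 1 holds, i.e., Σ_n ((a,b);(p,q))_n/((p,q);(p,q))_n z^n and Σ_n ((b,a);(p,q))_n/((p,q);(p,q))_n z^n are multiplicative inverses. -/

import Mathlib

/-- The `(p,q)`-shifted factorial `((a,b);(p,q))ₙ = ∏_{j=0}^{n-1} (a pʲ - b qʲ)`. -/
def pqPoch (a b p q : ℂ) (n : ℕ) : ℂ := ∏ j ∈ Finset.range n, (a * p ^ j - b * q ^ j)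

/-- The series `₁Φ₀((a,b);—;(p,q),z)`. -/
noncomputable def Phi10 (a b p q z : ℂ) : ℂ :=
  ∑' n : ℕ, pqPoch a b p q n / pqPoch p q p q n * z ^ n

open PowerSeries Finset

section aux

variable (a b p q : ℂ)

/-- coefficient sequence -/
noncomputable def pqCoeff (n : ℕ) : ℂ := pqPoch a b p q n / pqPoch p q p q n

lemma pqPoch_succ (n : ℕ) :
    pqPoch a b p q (n + 1) = pqPoch a b p q n * (a * p ^ n - b * q ^ n) := by
  simp [pqPoch, Finset.prod_range_succ]

lemma pqPoch_den_ne_zero (hqp : ‖q‖ < ‖p‖) (n : ℕ) : pqPoch p q p q n ≠ 0 := by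
  rw [pqPoch, Finset.prod_ne_zero_iff]
  intro j _
  intro h
  have h2 : ‖p * p ^ j‖ = ‖q * q ^ j‖ := by rw [sub_eq_zero] at h; rw [h]
  have hq : (0:ℝ) ≤ ‖q‖ := norm_nonneg q
  have : ‖q‖ ^ (j+1) < ‖p‖ ^ (j+1) := by
    exact pow_lt_pow_left₀ hqp hq (Nat.succ_ne_zero j)
  simp only [norm_mul, norm_pow] at h2
  rw [← pow_succ', ← pow_succ'] at h2
  linarith

lemma pqCoeff_zero : pqCoeff a b p q 0 = 1 := by simp [pqCoeff, pqPoch]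

lemma pqCoeff_rec (hqp : ‖q‖ < ‖p‖) (n : ℕ) :
    pqCoeff a b p q (n + 1) * (p ^ (n + 1) - q ^ (n + 1)) =
      pqCoeff a b p q n * (a * p ^ n - b * q ^ n) := by
  have h1 := pqPoch_den_ne_zero p q hqp n
  have h3 : p * p ^ n - q * q ^ n ≠ 0 := by
    have h2 := pqPoch_den_ne_zero p q hqp (n + 1)
    rw [pqPoch_succ] at h2
    exact right_ne_zero_of_mul h2
  rw [pqCoeff, pqCoeff, pqPoch_succ, pqPoch_succ p q p q, pow_succ, pow_succ]
  rw [mul_comm p (p ^ n), mul_comm q (q ^ n)] at h3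
  field_simp

/-- Formal power series of the Phi10 series -/
noncomputable def pqF : ℂ⟦X⟧ := PowerSeries.mk (pqCoeff a b p q)

lemma pqF_funeq (hqp : ‖q‖ < ‖p‖) :
    (1 - C a * X) * rescale p (pqF a b p q) =
      (1 - C b * X) * rescale q (pqF a b p q) := by
  ext n
  rw [sub_mul, sub_mul, one_mul, one_mul, map_sub, map_sub]
  rcases n with _ | n
  · simp [pqF, rescale_mk, coeff_mk, mul_comm, PowerSeries.coeff_mul,
      Finset.Nat.antidiagonal_zero]
  · have key : ∀ r s : ℂ, (PowerSeries.coeff (n + 1)) (C r * X * rescale s (pqF a b p q))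
        = r * (s ^ n * pqCoeff a b p q n) := by
      intro r s
      rw [mul_assoc, mul_comm X, ← mul_assoc, coeff_succ_mul_X, coeff_C_mul, pqF,
        rescale_mk, coeff_mk]
    rw [key, key, pqF, rescale_mk, rescale_mk, coeff_mk, coeff_mk]
    linear_combination pqCoeff_rec a b p q hqp n

lemma pqF_sum_eq (hqp : ‖q‖ < ‖p‖) (n : ℕ) (hn : n ≠ 0) :
    ∑ kl ∈ Finset.HasAntidiagonal.antidiagonal n, pqCoeff a b p q kl.1 * pqCoeff b a p q kl.2 = 0 := by
  have hprod : rescale p (pqF a b p q * pqF b a p q) =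
      rescale q (pqF a b p q * pqF b a p q) := by
    have hu : ((1 : ℂ⟦X⟧) - C a * X) * ((1 : ℂ⟦X⟧) - C b * X) ≠ 0 := by
      intro h
      have := congrArg (PowerSeries.constantCoeff) h
      simp at this
    apply mul_left_cancel₀ hu
    rw [map_mul, map_mul]
    calc (1 - C a * X) * (1 - C b * X) * (rescale p (pqF a b p q) * rescale p (pqF b a p q))
        = ((1 - C a * X) * rescale p (pqF a b p q)) *
          ((1 - C b * X) * rescale p (pqF b a p q)) := by ring
      _ = ((1 - C b * X) * rescale q (pqF a b p q)) *
          ((1 - C a * X) * rescale q (pqF b a p q)) := by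
          rw [pqF_funeq a b p q hqp, pqF_funeq b a p q hqp]
      _ = (1 - C a * X) * (1 - C b * X) * (rescale q (pqF a b p q) * rescale q (pqF b a p q)) := by
          ring
  have hco := congrArg (PowerSeries.coeff n) hprod
  rw [coeff_rescale, coeff_rescale] at hco
  have hS : ∀ m : ℕ, PowerSeries.coeff m (pqF a b p q * pqF b a p q) =
      ∑ kl ∈ Finset.HasAntidiagonal.antidiagonal m, pqCoeff a b p q kl.1 * pqCoeff b a p q kl.2 := by
    intro m
    rw [PowerSeries.coeff_mul]
    exact Finset.sum_congr rfl fun kl _ => by rw [pqF, pqF, coeff_mk, coeff_mk]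
  rw [hS] at hco
  have hpq : p ^ n ≠ q ^ n := by
    intro h
    have hlt : ‖q‖ ^ n < ‖p‖ ^ n := pow_lt_pow_left₀ hqp (norm_nonneg q) hn
    rw [← norm_pow, ← norm_pow, h] at hlt
    exact lt_irrefl _ hlt
  have := sub_eq_zero.mpr hco
  rw [← sub_mul] at this
  rcases mul_eq_zero.mp this with h | h
  · exact absurd (sub_eq_zero.mp h) hpq
  · exact h

lemma pqCoeff_norm_le (hqp : ‖q‖ < ‖p‖) (n : ℕ) :
    ‖pqCoeff a b p q n‖ ≤ ((‖a‖ + ‖b‖) / (‖p‖ - ‖q‖)) ^ n := by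
  have hpq0 : (0:ℝ) < ‖p‖ - ‖q‖ := sub_pos.mpr hqp
  have hp0 : (0:ℝ) < ‖p‖ := (norm_nonneg q).trans_lt hqp
  rw [pqCoeff, pqPoch, pqPoch, ← Finset.prod_div_distrib]
  rw [norm_prod (Finset.range n)]
  have hcard : ((‖a‖ + ‖b‖) / (‖p‖ - ‖q‖)) ^ n
      = ∏ _j ∈ Finset.range n, (‖a‖ + ‖b‖) / (‖p‖ - ‖q‖) := by
    rw [Finset.prod_const, Finset.card_range]
  rw [hcard]
  refine Finset.prod_le_prod (fun j _ => norm_nonneg _) (fun j _ => ?_)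
  rw [norm_div]
  have hqpj : ‖q‖ ^ j ≤ ‖p‖ ^ j := pow_le_pow_left₀ (norm_nonneg q) hqp.le j
  have hnum : ‖a * p ^ j - b * q ^ j‖ ≤ (‖a‖ + ‖b‖) * ‖p‖ ^ j := by
    refine le_trans (norm_sub_le _ _) ?_
    rw [norm_mul, norm_mul, norm_pow, norm_pow]
    nlinarith [norm_nonneg a, norm_nonneg b]
  have hden : (‖p‖ - ‖q‖) * ‖p‖ ^ j ≤ ‖p * p ^ j - q * q ^ j‖ := by
    refine le_trans ?_ (norm_sub_norm_le _ _)
    rw [norm_mul, norm_mul, norm_pow, norm_pow]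
    nlinarith [norm_nonneg q, pow_nonneg (norm_nonneg q) j]
  calc ‖a * p ^ j - b * q ^ j‖ / ‖p * p ^ j - q * q ^ j‖
      ≤ ((‖a‖ + ‖b‖) * ‖p‖ ^ j) / ((‖p‖ - ‖q‖) * ‖p‖ ^ j) :=
        div_le_div₀ (by positivity) hnum (by positivity) hden
    _ = (‖a‖ + ‖b‖) / (‖p‖ - ‖q‖) := by
        rw [mul_div_mul_right _ _ (by positivity : (‖p‖:ℝ) ^ j ≠ 0)]

end aux

theorem Phi10_mul_swap_eq_one (a b p q : ℂ) (hqp : ‖q‖ < ‖p‖) (hp : ‖p‖ ≤ 1) :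
    ∃ ε > 0, ∀ z : ℂ, ‖z‖ < ε →
      Phi10 a b p q z * Phi10 b a p q z = 1 := by
  set K : ℝ := (‖a‖ + ‖b‖) / (‖p‖ - ‖q‖) with hKdef
  have hpq0 : (0:ℝ) < ‖p‖ - ‖q‖ := sub_pos.mpr hqp
  have hK0 : 0 ≤ K := div_nonneg (by positivity) hpq0.le
  refine ⟨(K + 1)⁻¹, by positivity, fun z hz => ?_⟩
  have hr0 : 0 ≤ K * ‖z‖ := mul_nonneg hK0 (norm_nonneg z)
  have hr1 : K * ‖z‖ < 1 := by
    have h2 : (K + 1) * ‖z‖ < (K + 1) * (K + 1)⁻¹ :=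
      mul_lt_mul_of_pos_left hz (by positivity)
    rw [mul_inv_cancel₀ (by positivity : K + 1 ≠ 0)] at h2
    nlinarith [norm_nonneg z]
  have hgeom : Summable fun n : ℕ => (K * ‖z‖) ^ n := summable_geometric_of_lt_one hr0 hr1
  have hsum : ∀ a' b' : ℂ, ‖a'‖ + ‖b'‖ = ‖a‖ + ‖b‖ →
      Summable fun n : ℕ => ‖pqCoeff a' b' p q n * z ^ n‖ := by
    intro a' b' hab
    refine Summable.of_nonneg_of_le (fun n => norm_nonneg _) (fun n => ?_) hgeom
    rw [norm_mul, norm_pow, mul_pow]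
    refine mul_le_mul_of_nonneg_right ?_ (pow_nonneg (norm_nonneg z) n)
    calc ‖pqCoeff a' b' p q n‖ ≤ ((‖a'‖ + ‖b'‖) / (‖p‖ - ‖q‖)) ^ n :=
          pqCoeff_norm_le a' b' p q hqp n
      _ = K ^ n := by rw [hab]
  have hf := hsum a b rfl
  have hg := hsum b a (add_comm _ _)
  have hPhi : ∀ a' b' : ℂ, Phi10 a' b' p q z = ∑' n : ℕ, pqCoeff a' b' p q n * z ^ n := by
    intro a' b'; rfl
  rw [hPhi, hPhi, tsum_mul_tsum_eq_tsum_sum_antidiagonal_of_summable_norm hf hg]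
  have hterm : ∀ n : ℕ,
      (∑ kl ∈ Finset.HasAntidiagonal.antidiagonal n,
        pqCoeff a b p q kl.1 * z ^ kl.1 * (pqCoeff b a p q kl.2 * z ^ kl.2)) =
      (∑ kl ∈ Finset.HasAntidiagonal.antidiagonal n, pqCoeff a b p q kl.1 * pqCoeff b a p q kl.2) * z ^ n := by
    intro n
    rw [Finset.sum_mul]
    refine Finset.sum_congr rfl fun kl hkl => ?_
    have : kl.1 + kl.2 = n := Finset.HasAntidiagonal.mem_antidiagonal.mp hkl
    rw [← this, pow_add]
    ring
  calc (∑' n : ℕ, ∑ kl ∈ Finset.HasAntidiagonal.antidiagonal n,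
          pqCoeff a b p q kl.1 * z ^ kl.1 * (pqCoeff b a p q kl.2 * z ^ kl.2))
      = ∑' n : ℕ, (∑ kl ∈ Finset.HasAntidiagonal.antidiagonal n,
          pqCoeff a b p q kl.1 * pqCoeff b a p q kl.2) * z ^ n := by
        exact tsum_congr hterm
    _ = 1 := by
        rw [tsum_eq_single 0 ?_]
        · simp [pqCoeff_zero]
        · intro n hn
          rw [pqF_sum_eq a b p q hqp n hn, zero_mul]
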